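/- Let (P1, P2) ∈ Π(s1, t1) × Π(s2, t2) be a pair of shortest paths in the weighted DAG G that intersect (share at least one vertex). Then there exists a connected component B of the undirected graph obtained from (V, E_∩) by forgetting edge orientations such that V(P1) ∩ V(P2) ⊆ B. -/

import Mathlib

open scoped BigOperators

namespace DSP

variable {V : Type*} [Fintype V] [DecidableEq V]

/-- A path: a nonempty list of distinct vertices in which each consecutive
pair is joined by a directed edge. -/
def IsPath (E : V → V → Prop) (p : List V) : Prop :=
  p ≠ [] ∧ p.Nodup ∧ p.Chain' E

/-- A path from `x` to `y`. -/
def IsPathFrom (E : V → V → Prop) (p : List V) (x y : V) : Prop :=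
  IsPath E p ∧ p.head? = some x ∧ p.getLast? = some y

/-- The (ordered) list of edges of a path. -/
def pathEdges (p : List V) : List (V × V) := p.zip p.tail

/-- The weight of a path: the sum of its edge weights. -/
def pathWeight (ℓ : V → V → ℝ) (p : List V) : ℝ :=
  ((pathEdges p).map fun e => ℓ e.1 e.2).sum

/-- `dist x y` : the minimum weight of a path from `x` to `y`
(`⊤` if there is no such path). -/
noncomputable def dist (E : V → V → Prop) (ℓ : V → V → ℝ) (x y : V) : EReal :=
  sInf {w : EReal | ∃ p : List V, IsPathFrom E p x y ∧ (pathWeight ℓ p : EReal) = w}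

/-- A shortest path from `x` to `y` : a path from `x` to `y` whose weight
equals `dist x y`.  `Π(x, y)` is the set of all such paths. -/
def IsShortestPath (E : V → V → Prop) (ℓ : V → V → ℝ) (p : List V) (x y : V) : Prop :=
  IsPathFrom E p x y ∧ (pathWeight ℓ p : EReal) = dist E ℓ x y

/-- A directed cycle: a closed walk with at least one edge whose internal
vertices are pairwise distinct. -/
def IsCycle (E : V → V → Prop) (p : List V) : Prop :=
  2 ≤ p.length ∧ p.Chain' E ∧ p.head? = p.getLast? ∧ p.tail.Nodup

/-- `G` contains no directed cycle of negative or zero total weight. -/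
def NoNonposCycle (E : V → V → Prop) (ℓ : V → V → ℝ) : Prop :=
  ∀ p : List V, IsCycle E p → 0 < pathWeight ℓ p

/-- `G` is a DAG: it contains no directed cycle. -/
def Acyclic (E : V → V → Prop) : Prop :=
  ∀ p : List V, ¬ IsCycle E p

/-- `x` precedes `y` on the path `p` (`x = y` allowed). -/
def Precedes (p : List V) (x y : V) : Prop :=
  x ∈ p ∧ y ∈ p ∧ p.idxOf x ≤ p.idxOf y

/-- `subpath p x y` : the subpath `p[x, y]` of `p` from `x` to `y`
(for `x` preceding `y` on `p`). -/
def subpath (p : List V) (x y : V) : List V :=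
  (p.take (p.idxOf y + 1)).drop (p.idxOf x)

/-- Concatenation `p · q` of two paths (the last vertex of `p` coinciding
with the first vertex of `q`). -/
def pathConcat (p q : List V) : List V := p ++ q.tail

/-- A vertex is internal to a path if it lies on it and is not an endpoint. -/
def Internal (p : List V) (v : V) : Prop :=
  v ∈ p ∧ p.head? ≠ some v ∧ p.getLast? ≠ some v

/-- Paths `p1` from `x1` to `y1` and `p2` from `x2` to `y2` are internally
vertex-disjoint: they share no vertices except possibly those in
`{x1, y1} ∩ {x2, y2}`. -/
def InternallyDisjoint (p1 : List V) (x1 y1 : V) (p2 : List V) (x2 y2 : V) : Prop :=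
  ∀ u, u ∈ p1 → u ∈ p2 → u ∈ ({x1, y1} ∩ {x2, y2} : Set V)

/-- `(a, b)` is a twin-crossing pair for paths `p1`, `p2`. -/
def TwinCrossingPair (p1 p2 : List V) (a b : V) : Prop :=
  a ≠ b ∧ Precedes p1 a b ∧ Precedes p2 a b ∧ subpath p1 a b ≠ subpath p2 a b

/-- The swap operation `φ_{a,b}(P1, P2)`. -/
def swap (p1 : List V) (x1 y1 : V) (p2 : List V) (x2 y2 : V) (a b : V) :
    List V × List V :=
  (pathConcat (pathConcat (subpath p1 x1 a) (subpath p2 a b)) (subpath p1 b y1),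
   pathConcat (pathConcat (subpath p2 x2 a) (subpath p1 a b)) (subpath p2 b y2))

/-- The graph with vertex `u` deleted. -/
def deleteVertex (E : V → V → Prop) (u : V) : V → V → Prop :=
  fun a b => E a b ∧ a ≠ u ∧ b ≠ u

/-- `u` is distance-critical for `(x, y)` : deleting `u` strictly increases
the distance from `x` to `y`. -/
def DistCritical (E : V → V → Prop) (ℓ : V → V → ℝ) (x y u : V) : Prop :=
  dist E ℓ x y < dist (deleteVertex E u) ℓ x y

/-- `Δ(x, y)` : the distance-critical vertices for `(x, y)` together with the
endpoints `x`, `y`. -/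
def Delta (E : V → V → Prop) (ℓ : V → V → ℝ) (x y : V) : Set V :=
  {u | DistCritical E ℓ x y u} ∪ {x, y}

/-- `δ(x, y) = |Δ(x, y)|`. -/
noncomputable def deltaCard (E : V → V → Prop) (ℓ : V → V → ℝ) (x y : V) : ℕ :=
  (Delta E ℓ x y).ncard

/-- `(a, b)` is a concordant pair for paths `p1` (from `x1` to `y1`) and
`p2` (from `x2` to `y2`). -/
def ConcordantPair (p1 : List V) (x1 y1 : V) (p2 : List V) (x2 y2 : V) (a b : V) : Prop :=
  a ∉ ({x1, y1} ∩ {x2, y2} : Set V) ∧ b ∉ ({x1, y1} ∩ {x2, y2} : Set V) ∧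
  Precedes p1 a b ∧ Precedes p2 a b ∧
  InternallyDisjoint (subpath p1 x1 a) x1 a (subpath p2 x2 a) x2 a ∧
  InternallyDisjoint (subpath p1 b y1) b y1 (subpath p2 b y2) b y2

/-- `𝒞(P1, P2)` : the set of concordant pairs for `(P1, P2)`. -/
def concordantSet (p1 : List V) (x1 y1 : V) (p2 : List V) (x2 y2 : V) : Set (V × V) :=
  {c | ConcordantPair p1 x1 y1 p2 x2 y2 c.1 c.2}

/-- The interaction complexity `γ(P1, P2) = Σ_{(v,w) ∈ 𝒞(P1,P2)} δ(v, w)`. -/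
noncomputable def gamma (E : V → V → Prop) (ℓ : V → V → ℝ)
    (p1 : List V) (x1 y1 : V) (p2 : List V) (x2 y2 : V) : ℕ :=
  ∑ᶠ c ∈ concordantSet p1 x1 y1 p2 x2 y2, deltaCard E ℓ c.1 c.2

/-- `E(x, y)` : the set of edges lying on at least one shortest path
from `x` to `y`. -/
def shortestEdges (E : V → V → Prop) (ℓ : V → V → ℝ) (x y : V) : Set (V × V) :=
  {e | ∃ p : List V, IsShortestPath E ℓ p x y ∧ e ∈ pathEdges p}

section Poly

variable (F : Type*) [Field F] [CharP F 2]

/-- The monomial `f(P) = ∏_{e ∈ E(P)} z_e` of a path. -/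
noncomputable def pathMon (p : List V) : MvPolynomial (V × V) F :=
  ((pathEdges p).map fun e => MvPolynomial.X e).prod

/-- The enumerating polynomial of a collection of paths. -/
noncomputable def enumPoly (S : Set (List V)) : MvPolynomial (V × V) F :=
  ∑ᶠ p ∈ S, pathMon F p

/-- The enumerating polynomial of a collection of pairs of paths. -/
noncomputable def enumPoly2 (S : Set (List V × List V)) : MvPolynomial (V × V) F :=
  ∑ᶠ q ∈ S, pathMon F q.1 * pathMon F q.2

variable (E : V → V → Prop) (ℓ : V → V → ℝ)

/-- `F(x, y)` : the enumerating polynomial of `Π(x, y)`. -/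
noncomputable def Fpoly (x y : V) : MvPolynomial (V × V) F :=
  enumPoly F {p : List V | IsShortestPath E ℓ p x y}

end Poly

variable (E : V → V → Prop) (ℓ : V → V → ℝ)

/-! ### Auxiliary lemmas -/

section Aux
set_option linter.unusedSectionVars false

lemma pathEdges_cons (x y : V) (t : List V) :
    pathEdges (x :: y :: t) = (x, y) :: pathEdges (y :: t) := rfl

lemma pathEdges_concat : ∀ (u v : List V), u.getLast? = v.head? →
    pathEdges (u ++ v.tail) = pathEdges u ++ pathEdges v
  | [], v, h => by
    cases v with
    | nil => simp [pathEdges]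
    | cons a w => simp at h
  | [x], v, h => by
    cases v with
    | nil => simp at h
    | cons a w =>
      simp at h; subst h
      simp [pathEdges]
  | x :: y :: u, v, h => by
    have h' : (y :: u).getLast? = v.head? := by
      rwa [List.getLast?_cons_cons] at h
    have ih := pathEdges_concat (y :: u) v h'
    simp only [List.cons_append, pathEdges_cons] at ih ⊢
    rw [ih]

lemma pathWeight_concat (ℓ : V → V → ℝ) (u v : List V) (h : u.getLast? = v.head?) :
    pathWeight ℓ (pathConcat u v) = pathWeight ℓ u + pathWeight ℓ v := by
  unfold pathConcat pathWeight
  rw [pathEdges_concat u v h, List.map_append, List.sum_append]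

lemma pathEdges_subset_cons (x : V) (m : List V) : pathEdges m ⊆ pathEdges (x :: m) := by
  cases m with
  | nil => simp [pathEdges]
  | cons y t => rw [pathEdges_cons]; exact List.subset_cons_self _ _

lemma pathEdges_subset_append_right (u w : List V) :
    pathEdges w ⊆ pathEdges (u ++ w) := by
  induction u with
  | nil => simp
  | cons x u ih => exact List.Subset.trans ih (by simpa using pathEdges_subset_cons x (u ++ w))

lemma pathEdges_subset_append_left : ∀ (u w : List V), pathEdges u ⊆ pathEdges (u ++ w)
  | [], w => by simp [pathEdges]
  | [x], w => by simp [pathEdges]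
  | x :: y :: u, w => by
    simp only [List.cons_append, pathEdges_cons]
    exact List.cons_subset_cons _ (by
      simpa using pathEdges_subset_append_left (y :: u) w)

lemma pathEdges_infix {l₁ l₂ : List V} (h : l₁ <:+: l₂) :
    pathEdges l₁ ⊆ pathEdges l₂ := by
  obtain ⟨s, t, rfl⟩ := h
  refine List.Subset.trans (pathEdges_subset_append_left l₁ t) ?_
  rw [List.append_assoc]
  exact pathEdges_subset_append_right s _

lemma chain'_pathEdges : ∀ (l : List V), l.Chain' (fun c d => (c, d) ∈ pathEdges l)
  | [] => List.isChain_nil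
  | [x] => List.isChain_singleton x
  | x :: y :: t => by
    change List.IsChain _ _
    rw [List.isChain_cons_cons]
    refine ⟨by rw [pathEdges_cons]; exact List.mem_cons_self, ?_⟩
    exact (chain'_pathEdges (y :: t)).imp fun a b h => pathEdges_subset_cons x _ h

lemma chain'_reflTransGen {R : V → V → Prop} :
    ∀ (l : List V), l.Chain' R → ∀ a b, l.head? = some a → l.getLast? = some b →
      Relation.ReflTransGen R a b
  | [], _, a, b, ha, _ => by simp at ha
  | [x], _, a, b, ha, hb => by
    simp at ha hb; subst ha; subst hb; exact Relation.ReflTransGen.refl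
  | x :: y :: t, hch, a, b, ha, hb => by
    simp at ha; subst ha
    change List.IsChain R _ at hch
    rw [List.isChain_cons_cons] at hch
    have := chain'_reflTransGen (y :: t) hch.2 y b rfl
      (by rwa [List.getLast?_cons_cons] at hb)
    exact Relation.ReflTransGen.head hch.1 this

lemma subpath_infix (p : List V) (x y : V) : subpath p x y <:+: p :=
  (List.drop_suffix _ _).isInfix.trans (List.take_prefix _ p).isInfix

lemma getElem?_subpath (p : List V) (x y : V) (k : ℕ)
    (hk : p.idxOf x + k < p.idxOf y + 1) :
    (subpath p x y)[k]? = p[p.idxOf x + k]? := by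
  unfold subpath
  rw [List.getElem?_drop, List.getElem?_take, if_pos hk]

lemma length_subpath (p : List V) (x y : V) (hy : y ∈ p) :
    (subpath p x y).length = p.idxOf y + 1 - p.idxOf x := by
  unfold subpath
  have := List.idxOf_lt_length_iff.mpr hy
  rw [List.length_drop, List.length_take]
  omega

lemma head?_subpath (p : List V) (x y : V) (hx : x ∈ p)
    (hij : p.idxOf x ≤ p.idxOf y) :
    (subpath p x y).head? = some x := by
  have hi := List.idxOf_lt_length_iff.mpr hx
  rw [List.head?_eq_getElem?, getElem?_subpath p x y 0 (by omega),
    List.getElem?_eq_getElem (by omega)]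
  simp [List.getElem_idxOf]

lemma getLast?_subpath (p : List V) (x y : V) (hy : y ∈ p)
    (hij : p.idxOf x ≤ p.idxOf y) :
    (subpath p x y).getLast? = some y := by
  have hj := List.idxOf_lt_length_iff.mpr hy
  rw [List.getLast?_eq_getElem?, length_subpath p x y hy]
  have h1 : p.idxOf y + 1 - p.idxOf x - 1 = p.idxOf y - p.idxOf x := by omega
  rw [h1, getElem?_subpath p x y _ (by omega),
    show p.idxOf x + (p.idxOf y - p.idxOf x) = p.idxOf y by omega,
    List.getElem?_eq_getElem (by omega)]
  simp [List.getElem_idxOf]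

lemma subpath_ne_nil (p : List V) (x y : V) (hx : x ∈ p)
    (hij : p.idxOf x ≤ p.idxOf y) : subpath p x y ≠ [] := by
  intro h
  have := head?_subpath p x y hx hij
  rw [h] at this; simp at this

lemma mem_subpath (p : List V) (hnd : p.Nodup) (x y v : V) (hy : y ∈ p)
    (hv : v ∈ subpath p x y) :
    v ∈ p ∧ p.idxOf x ≤ p.idxOf v ∧ p.idxOf v ≤ p.idxOf y := by
  have hvp : v ∈ p := (subpath_infix p x y).sublist.subset hv
  obtain ⟨k, hk, hkv⟩ := List.mem_iff_getElem.mp hv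
  have hlen := length_subpath p x y hy
  have hik : p.idxOf x + k < p.idxOf y + 1 := by omega
  have h2 : (subpath p x y)[k]? = p[p.idxOf x + k]? := getElem?_subpath p x y k hik
  rw [List.getElem?_eq_getElem hk, hkv] at h2
  have hxk : p.idxOf x + k < p.length := by
    have := List.idxOf_lt_length_iff.mpr hy; omega
  rw [List.getElem?_eq_getElem hxk] at h2
  have h3 : p[p.idxOf x + k] = v := by injection h2.symm
  have h4 : p.idxOf v = p.idxOf x + k := by
    rw [← h3]; exact List.Nodup.idxOf_getElem hnd _ _
  exact ⟨hvp, by omega, by omega⟩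

lemma subpath_concat (p : List V) (a m b : V)
    (him : p.idxOf a ≤ p.idxOf m) (hmj : p.idxOf m ≤ p.idxOf b) :
    pathConcat (subpath p a m) (subpath p m b) = subpath p a b := by
  unfold pathConcat subpath
  rw [List.tail_drop]
  have h1 : p.take (p.idxOf m + 1) = (p.take (p.idxOf b + 1)).take (p.idxOf m + 1) := by
    rw [List.take_take]; congr 1; omega
  rw [h1]
  set t := p.take (p.idxOf b + 1)
  rw [List.drop_take]
  have h2 : t.drop (p.idxOf m + 1)
      = (t.drop (p.idxOf a)).drop (p.idxOf m + 1 - p.idxOf a) := by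
    rw [List.drop_drop]; congr 1; omega
  rw [h2, List.take_append_drop]

lemma subpath_eq_self (p : List V) (hnd : p.Nodup) (x y : V)
    (hx : p.head? = some x) (hy : p.getLast? = some y) : subpath p x y = p := by
  have hne : p ≠ [] := by intro h; rw [h] at hx; simp at hx
  have hlen : 0 < p.length := List.length_pos_iff.mpr hne
  rw [List.head?_eq_getElem?, List.getElem?_eq_getElem hlen] at hx
  rw [List.getLast?_eq_getElem?, List.getElem?_eq_getElem (by omega)] at hy
  have h0 : p.idxOf x = 0 := by
    rw [show x = p[0] by injection hx.symm]; exact List.Nodup.idxOf_getElem hnd _ _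
  have h1 : p.idxOf y = p.length - 1 := by
    rw [show y = p[p.length - 1] by injection hy.symm]; exact List.Nodup.idxOf_getElem hnd _ _
  unfold subpath
  rw [h0, h1, List.drop_zero, show p.length - 1 + 1 = p.length by omega, List.take_length]

lemma transGen_walk {E : V → V → Prop} {a b : V} (h : Relation.TransGen E a b) :
    ∃ p : List V, p.Chain' E ∧ p.head? = some a ∧ p.getLast? = some b ∧ 2 ≤ p.length := by
  induction h with
  | @single c h => exact ⟨[a, c], by simp [List.Chain', h], rfl, rfl, by simp⟩
  | @tail b c h1 h2 ih =>
    obtain ⟨p, hch, hh, hl, h2len⟩ := ih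
    have hne : p ≠ [] := by intro h; rw [h] at hh; simp at hh
    refine ⟨p ++ [c], ?_, ?_, ?_, ?_⟩
    · change List.IsChain _ _
      rw [List.isChain_append]
      exact ⟨hch, List.isChain_singleton _, fun x hx y hy => by
        simp at hy; subst hy
        rw [hl] at hx; simp at hx; subst hx; exact h2⟩
    · rw [List.head?_append, hh]; rfl
    · simp
    · simp; omega

lemma closed_walk_cycle_aux {E : V → V → Prop} {n : ℕ}
    (ih : ∀ (p : List V), p.length ≤ n → p.Chain' E →
      p.head? = p.getLast? → 2 ≤ p.length → ∃ c, IsCycle E c)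
    (p : List V) (hlen : p.length ≤ n + 1) (hch : p.Chain' E)
    (h2 : 2 ≤ p.length)
    (i j : Fin p.tail.length) (hij : p.tail.get i = p.tail.get j)
    (hlt : (i:ℕ) < (j:ℕ)) :
    ∃ c, IsCycle E c := by
  have htl : p.tail.length = p.length - 1 := by simp
  have hjlt : (j:ℕ) < p.length - 1 := by have := j.isLt; omega
  set q := (p.take ((j:ℕ) + 2)).drop ((i:ℕ) + 1) with hq
  have hqinf : q <:+: p := (List.drop_suffix _ _).isInfix.trans (List.take_prefix _ p).isInfix
  have hqlen : q.length = (j:ℕ) + 1 - (i:ℕ) := by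
    rw [hq, List.length_drop, List.length_take]; omega
  have hget : ∀ k : ℕ, p.tail[k]? = p[k+1]? := by
    intro k
    rw [← List.drop_one, List.getElem?_drop]; congr 1; omega
  have hq0 : q[0]? = p[(i:ℕ)+1]? := by
    rw [hq, List.getElem?_drop, List.getElem?_take, if_pos (by omega)]
  have hqL : q[q.length - 1]? = p[(j:ℕ)+1]? := by
    rw [hqlen, hq, List.getElem?_drop, List.getElem?_take, if_pos (by omega)]
    congr 1; omega
  have hheads : q.head? = q.getLast? := by
    rw [List.head?_eq_getElem?, List.getLast?_eq_getElem?, hq0, hqL,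
      ← hget (i:ℕ), ← hget (j:ℕ),
      List.getElem?_eq_getElem i.isLt, List.getElem?_eq_getElem j.isLt]
    simp only [← List.get_eq_getElem, hij]
  exact ih q (by omega) (hch.infix hqinf) hheads (by omega)

lemma closed_walk_cycle {E : V → V → Prop} :
    ∀ (n : ℕ) (p : List V), p.length ≤ n → p.Chain' E →
      p.head? = p.getLast? → 2 ≤ p.length → ∃ c, IsCycle E c := by
  intro n
  induction n with
  | zero => intro p h _ _ h2; omega
  | succ n ih =>
    intro p hlen hch heq h2
    by_cases hnd : p.tail.Nodup
    · exact ⟨p, h2, hch, heq, hnd⟩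
    · rw [List.nodup_iff_injective_get] at hnd
      unfold Function.Injective at hnd
      push_neg at hnd
      obtain ⟨i, j, hij, hne⟩ := hnd
      rcases (Fin.val_ne_of_ne hne).lt_or_gt with hlt | hlt
      · exact closed_walk_cycle_aux ih p hlen hch h2 i j hij hlt
      · exact closed_walk_cycle_aux ih p hlen hch h2 j i hij.symm hlt

lemma acyclic_no_trans {E : V → V → Prop} (hdag : Acyclic E) (v : V) :
    ¬ Relation.TransGen E v v := by
  intro h
  obtain ⟨p, hch, hh, hl, h2⟩ := transGen_walk h
  obtain ⟨c, hc⟩ := closed_walk_cycle p.length p le_rfl hch (by rw [hh, hl]) h2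
  exact hdag c hc

lemma reflTransGen_of_indexOf_le {E : V → V → Prop} (p : List V) (hch : p.Chain' E)
    {a b : V} (ha : a ∈ p) (hb : b ∈ p) (h : p.idxOf a ≤ p.idxOf b) :
    Relation.ReflTransGen E a b :=
  chain'_reflTransGen _ (hch.infix (subpath_infix p a b)) a b
    (head?_subpath p a b ha h) (getLast?_subpath p a b hb h)

lemma transGen_of_indexOf_le {E : V → V → Prop} (p : List V) (hch : p.Chain' E)
    {a b : V} (ha : a ∈ p) (hb : b ∈ p) (h : p.idxOf a ≤ p.idxOf b)
    (hne : a ≠ b) : Relation.TransGen E a b := by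
  rcases (reflTransGen_of_indexOf_le p hch ha hb h).cases_head with h1 | ⟨c, hc, hcb⟩
  · exact absurd h1 hne
  · exact Relation.TransGen.head' hc hcb

lemma chain'_pathConcat {E : V → V → Prop} {u v : List V} (hu : u.Chain' E)
    (hv : v.Chain' E) (h : u.getLast? = v.head?) : (pathConcat u v).Chain' E := by
  unfold pathConcat
  change List.IsChain _ _
  rw [List.isChain_append]
  refine ⟨hu, hv.tail, fun c hc d hd => ?_⟩
  have hc' : v.head? = some c := by rw [← h]; exact hc
  cases v with
  | nil => simp at hc'
  | cons z t =>
    have hzc : z = c := by simpa using hc'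
    subst hzc
    exact (List.isChain_cons.mp hv).1 d hd

lemma head?_pathConcat {u v : List V} (hu : u ≠ []) :
    (pathConcat u v).head? = u.head? := by
  unfold pathConcat
  rw [List.head?_append]
  cases u with
  | nil => exact absurd rfl hu
  | cons z t => rfl

lemma getLast?_pathConcat {u v : List V} (h : u.getLast? = v.head?) (hv : v ≠ []) :
    (pathConcat u v).getLast? = v.getLast? := by
  unfold pathConcat
  rw [List.getLast?_append]
  cases v with
  | nil => exact absurd rfl hv
  | cons z t =>
    cases t with
    | nil => simp_all
    | cons w t' =>
      rw [show (z :: w :: t').tail = w :: t' from rfl,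
        List.getLast?_cons_cons, List.getLast?_eq_getLast (l := w :: t') (by simp)]
      rfl

lemma swap_spec {E : V → V → Prop} (ℓ : V → V → ℝ) (hdag : Acyclic E)
    {P P' : List V} {x y a b : V}
    (hP : IsPathFrom E P x y) (hne' : P' ≠ []) (hnd' : P'.Nodup) (hch' : P'.Chain' E)
    (haP : a ∈ P) (hbP : b ∈ P) (haP' : a ∈ P') (hbP' : b ∈ P')
    (hab : P.idxOf a ≤ P.idxOf b) (hab' : P'.idxOf a ≤ P'.idxOf b) :
    IsPathFrom E (pathConcat (pathConcat (subpath P x a) (subpath P' a b)) (subpath P b y)) x y ∧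
    pathWeight ℓ (pathConcat (pathConcat (subpath P x a) (subpath P' a b)) (subpath P b y))
      + pathWeight ℓ (subpath P a b)
      = pathWeight ℓ P + pathWeight ℓ (subpath P' a b) ∧
    pathEdges (subpath P' a b) ⊆
      pathEdges (pathConcat (pathConcat (subpath P x a) (subpath P' a b)) (subpath P b y)) := by
  obtain ⟨⟨hPne, hPnd, hPch⟩, hPhead, hPlast⟩ := hP
  have hlenP : 0 < P.length := List.length_pos_iff.mpr hPne
  have hxP : x ∈ P ∧ P.idxOf x = 0 := by
    cases P with
    | nil => simp at hPhead
    | cons z t =>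
      have hzx : z = x := by simpa using hPhead
      subst hzx
      exact ⟨List.mem_cons_self, List.idxOf_cons_self⟩
  have hyP : y ∈ P ∧ P.idxOf y = P.length - 1 := by
    have hgl : P.getLast? = some (P.getLast hPne) := List.getLast?_eq_getLast hPne
    rw [hPlast] at hgl
    have hyg : y = P.getLast hPne := by injection hgl
    refine ⟨hyg ▸ List.getLast_mem hPne, ?_⟩
    rw [hyg, List.getLast_eq_getElem hPne]
    exact List.Nodup.idxOf_getElem hPnd _ _
  have hia : P.idxOf a < P.length := List.idxOf_lt_length_iff.mpr haP
  have hib : P.idxOf b < P.length := List.idxOf_lt_length_iff.mpr hbP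
  have hxa : P.idxOf x ≤ P.idxOf a := by omega
  have hxb : P.idxOf x ≤ P.idxOf b := by omega
  have hby : P.idxOf b ≤ P.idxOf y := by omega
  set A := subpath P x a with hA
  set M := subpath P' a b with hM
  set B := subpath P b y with hB
  have hAhead : A.head? = some x := head?_subpath P x a hxP.1 hxa
  have hAlast : A.getLast? = some a := getLast?_subpath P x a haP hxa
  have hMhead : M.head? = some a := head?_subpath P' a b haP' hab'
  have hMlast : M.getLast? = some b := getLast?_subpath P' a b hbP' hab'
  have hBhead : B.head? = some b := head?_subpath P b y hbP hby
  have hBlast : B.getLast? = some y := getLast?_subpath P b y hyP.1 hby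
  have hAne : A ≠ [] := subpath_ne_nil P x a hxP.1 hxa
  have hMne : M ≠ [] := subpath_ne_nil P' a b haP' hab'
  have hBne : B ≠ [] := subpath_ne_nil P b y hbP hby
  have hAch : A.Chain' E := hPch.infix (subpath_infix P x a)
  have hMch : M.Chain' E := hch'.infix (subpath_infix P' a b)
  have hBch : B.Chain' E := hPch.infix (subpath_infix P b y)
  have hAM : A.getLast? = M.head? := hAlast.trans hMhead.symm
  have hAMne : pathConcat A M ≠ [] := by
    unfold pathConcat
    intro hcon
    exact hAne (List.append_eq_nil_iff.mp hcon).1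
  have hAMlast : (pathConcat A M).getLast? = some b :=
    (getLast?_pathConcat hAM hMne).trans hMlast
  have hAMB : (pathConcat A M).getLast? = B.head? := hAMlast.trans hBhead.symm
  set Q := pathConcat (pathConcat A M) B with hQ
  have hQch : Q.Chain' E :=
    chain'_pathConcat (chain'_pathConcat hAch hMch hAM) hBch hAMB
  have hQhead : Q.head? = some x := by
    rw [hQ, head?_pathConcat hAMne, head?_pathConcat hAne, hAhead]
  have hQlast : Q.getLast? = some y := by
    rw [hQ, getLast?_pathConcat hAMB hBne, hBlast]
  have hQne : Q ≠ [] := by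
    intro h; rw [h] at hQhead; simp at hQhead
  -- nodup pieces
  have hAnd : A.Nodup := List.Nodup.sublist (subpath_infix P x a).sublist hPnd
  have hMnd : M.Nodup := List.Nodup.sublist (subpath_infix P' a b).sublist hnd'
  have hBnd : B.Nodup := List.Nodup.sublist (subpath_infix P b y).sublist hPnd
  have hMcons : M = a :: M.tail := by
    cases hMc : M with
    | nil => exact absurd hMc hMne
    | cons z t =>
      rw [hMc] at hMhead
      have : z = a := by simpa using hMhead
      rw [this]; rfl
  have hBcons : B = b :: B.tail := by
    cases hBc : B with
    | nil => exact absurd hBc hBne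
    | cons z t =>
      rw [hBc] at hBhead
      have : z = b := by simpa using hBhead
      rw [this]; rfl
  have haMt : a ∉ M.tail := by
    have := hMnd
    rw [hMcons] at this
    exact (List.nodup_cons.mp this).1
  have hbBt : b ∉ B.tail := by
    have := hBnd
    rw [hBcons] at this
    exact (List.nodup_cons.mp this).1
  have hmemMt : ∀ v ∈ M.tail, v ∈ P' ∧ P'.idxOf a < P'.idxOf v ∧
      P'.idxOf v ≤ P'.idxOf b := by
    intro v hv
    have hvM : v ∈ M := (List.tail_sublist M).subset hv
    obtain ⟨hvP', h1, h2⟩ := mem_subpath P' hnd' a b v hbP' hvM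
    have hva : v ≠ a := fun h => haMt (h ▸ hv)
    have : P'.idxOf a ≠ P'.idxOf v :=
      fun h => hva ((List.idxOf_inj hvP').mp h.symm)
    exact ⟨hvP', lt_of_le_of_ne h1 this, h2⟩
  have hmemBt : ∀ v ∈ B.tail, v ∈ P ∧ P.idxOf b < P.idxOf v := by
    intro v hv
    have hvB : v ∈ B := (List.tail_sublist B).subset hv
    obtain ⟨hvP, h1, h2⟩ := mem_subpath P hPnd b y v hyP.1 hvB
    have hvb : v ≠ b := fun h => hbBt (h ▸ hv)
    have : P.idxOf b ≠ P.idxOf v :=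
      fun h => hvb ((List.idxOf_inj hvP).mp h.symm)
    exact ⟨hvP, lt_of_le_of_ne h1 this⟩
  have hdisj1 : A.Disjoint M.tail := by
    intro v hvA hvMt
    obtain ⟨hvP, _, hva⟩ := mem_subpath P hPnd x a v haP hvA
    obtain ⟨hvP', hlt, _⟩ := hmemMt v hvMt
    have hav : a ≠ v :=
      fun h => absurd ((List.idxOf_inj haP').mpr h) (by omega)
    have ht : Relation.TransGen E a v :=
      transGen_of_indexOf_le P' hch' haP' hvP' (le_of_lt hlt) hav
    have hr : Relation.ReflTransGen E v a :=
      reflTransGen_of_indexOf_le P hPch hvP haP hva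
    exact acyclic_no_trans hdag a (ht.trans_left hr)
  have hdisj2 : (A ++ M.tail).Disjoint B.tail := by
    intro v hv hvBt
    obtain ⟨hvP, hbv⟩ := hmemBt v hvBt
    rcases List.mem_append.mp hv with hvA | hvMt
    · obtain ⟨_, _, hva⟩ := mem_subpath P hPnd x a v haP hvA
      omega
    · obtain ⟨hvP', _, hvb'⟩ := hmemMt v hvMt
      have hvb : v ≠ b := fun h => hbBt (h ▸ hvBt)
      have ht : Relation.TransGen E v b :=
        transGen_of_indexOf_le P' hch' hvP' hbP' hvb' hvb
      have hr : Relation.ReflTransGen E b v :=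
        reflTransGen_of_indexOf_le P hPch hbP hvP (le_of_lt hbv)
      exact acyclic_no_trans hdag v (ht.trans_left hr)
  have hQeq : Q = (A ++ M.tail) ++ B.tail := rfl
  have hQnd : Q.Nodup := by
    rw [hQeq, List.nodup_append', List.nodup_append']
    exact ⟨⟨hAnd, List.Nodup.sublist (List.tail_sublist M) hMnd, hdisj1⟩,
      List.Nodup.sublist (List.tail_sublist B) hBnd, hdisj2⟩
  refine ⟨⟨⟨hQne, hQnd, hQch⟩, hQhead, hQlast⟩, ?_, ?_⟩
  · -- weights
    have habhead : (subpath P a b).head? = some a := head?_subpath P a b haP hab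
    have hablast : (subpath P a b).getLast? = some b := getLast?_subpath P a b hbP hab
    have hxblast : (subpath P x b).getLast? = some b := getLast?_subpath P x b hbP hxb
    have e1 : pathConcat A (subpath P a b) = subpath P x b := subpath_concat P x a b hxa hab
    have e2 : pathConcat (subpath P x b) B = subpath P x y := subpath_concat P x b y hxb hby
    have e3 : subpath P x y = P := subpath_eq_self P hPnd x y hPhead hPlast
    have wQ : pathWeight ℓ Q = pathWeight ℓ A + pathWeight ℓ M + pathWeight ℓ B := by
      rw [hQ, pathWeight_concat ℓ _ B hAMB, pathWeight_concat ℓ A M hAM]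
    have wP : pathWeight ℓ P
        = pathWeight ℓ A + pathWeight ℓ (subpath P a b) + pathWeight ℓ B := by
      have hcl : (pathConcat A (subpath P a b)).getLast? = B.head? := by
        rw [e1]; exact hxblast.trans hBhead.symm
      conv_lhs => rw [← e3, ← e2, ← e1]
      rw [pathWeight_concat ℓ _ B hcl,
        pathWeight_concat ℓ A _ (hAlast.trans habhead.symm)]
    rw [wQ, wP]; ring
  · -- edges
    have hAgl : A.getLast hAne = a := by
      have := List.getLast?_eq_getLast (l := A) hAne
      rw [hAlast] at this
      injection this.symm
    have hAeq : A.dropLast ++ [a] = A := by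
      rw [← hAgl]; exact List.dropLast_append_getLast hAne
    have hMinf : M <:+: Q := by
      refine ⟨A.dropLast, B.tail, ?_⟩
      rw [hQeq, ← hAeq]
      conv_lhs => rw [hMcons]
      simp [List.append_assoc]
    exact pathEdges_infix hMinf

end Aux


/-- The collection of internally vertex-disjoint pairs
`(P1, P2) ∈ Π(x1, y1) × Π(x2, y2)`. -/
def disjPairs (x1 y1 x2 y2 : V) : Set (List V × List V) :=
  {q | IsShortestPath E ℓ q.1 x1 y1 ∧ IsShortestPath E ℓ q.2 x2 y2 ∧
       InternallyDisjoint q.1 x1 y1 q.2 x2 y2}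

/-- Pairs `(P1, P2) ∈ Π(x1, y1) × Π(x2, y2)` such that `v ∈ V(P1) ∩ V(P2)`
and the prefix `P1[x1, v]` and the suffix `P2[v, y2]` are internally
vertex-disjoint (defining `H_v`). -/
def HvPairs (v x1 y1 x2 y2 : V) : Set (List V × List V) :=
  {q | IsShortestPath E ℓ q.1 x1 y1 ∧ IsShortestPath E ℓ q.2 x2 y2 ∧
       v ∈ q.1 ∧ v ∈ q.2 ∧
       InternallyDisjoint (subpath q.1 x1 v) x1 v (subpath q.2 v y2) v y2}

/-- Pairs `(P1, P2) ∈ Π(x1, y1) × Π(x2, y2)` such that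
`(a, v) ∈ E(P1) ∩ E(P2)` and the prefix `P1[x1, a]` and the suffix
`P2[v, y2]` are internally vertex-disjoint (defining `H_{av}`). -/
def HavPairs (a v x1 y1 x2 y2 : V) : Set (List V × List V) :=
  {q | IsShortestPath E ℓ q.1 x1 y1 ∧ IsShortestPath E ℓ q.2 x2 y2 ∧
       (a, v) ∈ pathEdges q.1 ∧ (a, v) ∈ pathEdges q.2 ∧
       InternallyDisjoint (subpath q.1 x1 a) x1 a (subpath q.2 v y2) v y2}

/-- Pairs `(P1, P2) ∈ Π(x1, y1) × Π(x2, y2)` such that `v ∈ V(P1) ∩ V(P2)`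
and the prefix `P1[x1, v]` is internally vertex-disjoint from both
`P2[x2, v]` and `P2[v, y2]` (defining `D_v`). -/
def DvPairs (v x1 y1 x2 y2 : V) : Set (List V × List V) :=
  {q | IsShortestPath E ℓ q.1 x1 y1 ∧ IsShortestPath E ℓ q.2 x2 y2 ∧
       v ∈ q.1 ∧ v ∈ q.2 ∧
       InternallyDisjoint (subpath q.1 x1 v) x1 v (subpath q.2 x2 v) x2 v ∧
       InternallyDisjoint (subpath q.1 x1 v) x1 v (subpath q.2 v y2) v y2}

/-- Pairs `(P1, P2) ∈ Π(x1, y1) × Π(x2, y2)` with interaction complexity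
`γ(P1, P2) ≤ k` (defining `F_{disj,k}`). -/
def disjkPairs (k : ℤ) (x1 y1 x2 y2 : V) : Set (List V × List V) :=
  {q | IsShortestPath E ℓ q.1 x1 y1 ∧ IsShortestPath E ℓ q.2 x2 y2 ∧
       (gamma E ℓ q.1 x1 y1 q.2 x2 y2 : ℤ) ≤ k}

/-- Pairs `(P1, P2) ∈ Π(x1, y1) × Π(x2, y2)` with `γ(P1, P2) ≤ k` such that
`(v, w) ∈ 𝒞(P1, P2)` and `(v, w)` is the concordant pair appearing first
along `P1` (defining `D_{v,w,k}`). -/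
def DvwkPairs (k : ℤ) (v w x1 y1 x2 y2 : V) : Set (List V × List V) :=
  {q | IsShortestPath E ℓ q.1 x1 y1 ∧ IsShortestPath E ℓ q.2 x2 y2 ∧
       (gamma E ℓ q.1 x1 y1 q.2 x2 y2 : ℤ) ≤ k ∧
       (v, w) ∈ concordantSet q.1 x1 y1 q.2 x2 y2 ∧
       ∀ c ∈ concordantSet q.1 x1 y1 q.2 x2 y2, q.1.idxOf v ≤ q.1.idxOf c.1}

/-- Pairs `(P1, P2) ∈ Π(x1, y1) × Π(x2, y2)` such that `v` and `w` lie on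
both paths with `v` preceding `w` on both, the subpaths `P1[x1, v]` and
`P2[w, y2]` are internally vertex-disjoint, and
`γ(P1[v, y1], P2[x2, w]) ≤ k` (defining `H_{v,w,k}`). -/
def HvwkPairs (k : ℤ) (v w x1 y1 x2 y2 : V) : Set (List V × List V) :=
  {q | IsShortestPath E ℓ q.1 x1 y1 ∧ IsShortestPath E ℓ q.2 x2 y2 ∧
       Precedes q.1 v w ∧ Precedes q.2 v w ∧
       InternallyDisjoint (subpath q.1 x1 v) x1 v (subpath q.2 w y2) w y2 ∧
       (gamma E ℓ (subpath q.1 v y1) v y1 (subpath q.2 x2 w) x2 w : ℤ) ≤ k}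

/-- As `HvwkPairs`, additionally requiring the edge `(a, v)` on both paths
(disjointness imposed on `P1[x1, a]` and `P2[w, y2]`), defining `H_{av,w,k}`. -/
def HavwkPairs (k : ℤ) (a v w x1 y1 x2 y2 : V) : Set (List V × List V) :=
  {q | IsShortestPath E ℓ q.1 x1 y1 ∧ IsShortestPath E ℓ q.2 x2 y2 ∧
       Precedes q.1 v w ∧ Precedes q.2 v w ∧
       (a, v) ∈ pathEdges q.1 ∧ (a, v) ∈ pathEdges q.2 ∧
       InternallyDisjoint (subpath q.1 x1 a) x1 a (subpath q.2 w y2) w y2 ∧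
       (gamma E ℓ (subpath q.1 v y1) v y1 (subpath q.2 x2 w) x2 w : ℤ) ≤ k}

/-- As `HvwkPairs`, additionally requiring the edge `(w, b)` on both paths
(disjointness imposed on `P1[x1, v]` and `P2[b, y2]`), defining `H_{v,wb,k}`. -/
def HvwbkPairs (k : ℤ) (v w b x1 y1 x2 y2 : V) : Set (List V × List V) :=
  {q | IsShortestPath E ℓ q.1 x1 y1 ∧ IsShortestPath E ℓ q.2 x2 y2 ∧
       Precedes q.1 v w ∧ Precedes q.2 v w ∧
       (w, b) ∈ pathEdges q.1 ∧ (w, b) ∈ pathEdges q.2 ∧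
       InternallyDisjoint (subpath q.1 x1 v) x1 v (subpath q.2 b y2) b y2 ∧
       (gamma E ℓ (subpath q.1 v y1) v y1 (subpath q.2 x2 w) x2 w : ℤ) ≤ k}

/-- As `HvwkPairs`, additionally requiring both edges `(a, v)` and `(w, b)`
on both paths (disjointness imposed on `P1[x1, a]` and `P2[b, y2]`),
defining `H_{av,wb,k}`. -/
def HavwbkPairs (k : ℤ) (a v w b x1 y1 x2 y2 : V) : Set (List V × List V) :=
  {q | IsShortestPath E ℓ q.1 x1 y1 ∧ IsShortestPath E ℓ q.2 x2 y2 ∧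
       Precedes q.1 v w ∧ Precedes q.2 v w ∧
       (a, v) ∈ pathEdges q.1 ∧ (a, v) ∈ pathEdges q.2 ∧
       (w, b) ∈ pathEdges q.1 ∧ (w, b) ∈ pathEdges q.2 ∧
       InternallyDisjoint (subpath q.1 x1 a) x1 a (subpath q.2 b y2) b y2 ∧
       (gamma E ℓ (subpath q.1 v y1) v y1 (subpath q.2 x2 w) x2 w : ℤ) ≤ k}


section Main
set_option linter.unusedSectionVars false

lemma connected_common (E : V → V → Prop) (ℓ : V → V → ℝ) (hdag : Acyclic E)
    {s1 t1 s2 t2 : V} {P1 P2 : List V}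
    (h1 : IsShortestPath E ℓ P1 s1 t1) (h2 : IsShortestPath E ℓ P2 s2 t2)
    {a b : V} (ha1 : a ∈ P1) (hb1 : b ∈ P1) (ha2 : a ∈ P2) (hb2 : b ∈ P2)
    (hab : P1.idxOf a ≤ P1.idxOf b) :
    Relation.ReflTransGen (fun c d =>
      (c, d) ∈ shortestEdges E ℓ s1 t1 ∩ shortestEdges E ℓ s2 t2 ∨
      (d, c) ∈ shortestEdges E ℓ s1 t1 ∩ shortestEdges E ℓ s2 t2) a b := by
  by_cases hne : a = b
  · subst hne; exact Relation.ReflTransGen.refl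
  obtain ⟨hp1, hw1⟩ := h1
  obtain ⟨hp2, hw2⟩ := h2
  have hab2 : P2.idxOf a ≤ P2.idxOf b := by
    by_contra hcon
    push_neg at hcon
    have ht : Relation.TransGen E b a :=
      transGen_of_indexOf_le P2 hp2.1.2.2 hb2 ha2 hcon.le (Ne.symm hne)
    have hr : Relation.ReflTransGen E a b :=
      reflTransGen_of_indexOf_le P1 hp1.1.2.2 ha1 hb1 hab
    exact acyclic_no_trans hdag b (ht.trans_left hr)
  obtain ⟨hQpath, hQw, hQedges⟩ :=
    swap_spec (P := P2) (P' := P1) (x := s2) (y := t2) ℓ hdag hp2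
      hp1.1.1 hp1.1.2.1 hp1.1.2.2 ha2 hb2 ha1 hb1 hab2 hab
  obtain ⟨hQ'path, hQ'w, _⟩ :=
    swap_spec (P := P1) (P' := P2) (x := s1) (y := t1) ℓ hdag hp1
      hp2.1.1 hp2.1.2.1 hp2.1.2.2 ha1 hb1 ha2 hb2 hab hab2
  set Q := pathConcat (pathConcat (subpath P2 s2 a) (subpath P1 a b)) (subpath P2 b t2) with hQdef
  set Q' := pathConcat (pathConcat (subpath P1 s1 a) (subpath P2 a b)) (subpath P1 b t1) with hQ'def
  have hd2 : dist E ℓ s2 t2 ≤ (pathWeight ℓ Q : EReal) := sInf_le ⟨Q, hQpath, rfl⟩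
  have hd1 : dist E ℓ s1 t1 ≤ (pathWeight ℓ Q' : EReal) := sInf_le ⟨Q', hQ'path, rfl⟩
  rw [← hw2] at hd2
  rw [← hw1] at hd1
  have hle2 : pathWeight ℓ P2 ≤ pathWeight ℓ Q := EReal.coe_le_coe_iff.mp hd2
  have hle1 : pathWeight ℓ P1 ≤ pathWeight ℓ Q' := EReal.coe_le_coe_iff.mp hd1
  have heqw : pathWeight ℓ Q = pathWeight ℓ P2 := by linarith
  have hQshort : IsShortestPath E ℓ Q s2 t2 := by
    refine ⟨hQpath, ?_⟩
    rw [heqw, hw2]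
  have hMsub1 : pathEdges (subpath P1 a b) ⊆ pathEdges P1 :=
    pathEdges_infix (subpath_infix _ _ _)
  have hch : (subpath P1 a b).Chain' (fun c d =>
      (c, d) ∈ shortestEdges E ℓ s1 t1 ∩ shortestEdges E ℓ s2 t2 ∨
      (d, c) ∈ shortestEdges E ℓ s1 t1 ∩ shortestEdges E ℓ s2 t2) :=
    (chain'_pathEdges (subpath P1 a b)).imp fun c d hcd =>
      Or.inl ⟨⟨P1, ⟨hp1, hw1⟩, hMsub1 hcd⟩, ⟨Q, hQshort, hQedges hcd⟩⟩
  exact chain'_reflTransGen _ hch a b (head?_subpath P1 a b ha1 hab)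
    (getLast?_subpath P1 a b hb1 hab)

end Main


/-- In a weighted DAG, if `(P1, P2) ∈ Π(s1, t1) × Π(s2, t2)`
intersect, then there is a connected component `B` of the undirected graph
obtained from `(V, E_∩)` by forgetting orientations with
`V(P1) ∩ V(P2) ⊆ B`. -/
theorem intersection_within_single_component
    (hdag : Acyclic E) (s1 t1 s2 t2 : V) (P1 P2 : List V)
    (h1 : IsShortestPath E ℓ P1 s1 t1) (h2 : IsShortestPath E ℓ P2 s2 t2)
    (hint : ∃ u, u ∈ P1 ∧ u ∈ P2) :
    ∃ B : Set V,
      (∃ u : V, B = {z : V | Relation.ReflTransGen (fun c d =>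
          (c, d) ∈ shortestEdges E ℓ s1 t1 ∩ shortestEdges E ℓ s2 t2 ∨
          (d, c) ∈ shortestEdges E ℓ s1 t1 ∩ shortestEdges E ℓ s2 t2) u z}) ∧
      ∀ z, z ∈ P1 → z ∈ P2 → z ∈ B := by
  obtain ⟨u, hu1, hu2⟩ := hint
  refine ⟨_, ⟨u, rfl⟩, fun z hz1 hz2 => ?_⟩
  have hsymm : Symmetric (fun c d =>
      (c, d) ∈ shortestEdges E ℓ s1 t1 ∩ shortestEdges E ℓ s2 t2 ∨
      (d, c) ∈ shortestEdges E ℓ s1 t1 ∩ shortestEdges E ℓ s2 t2) :=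
    fun c d h => Or.symm h
  show Relation.ReflTransGen _ u z
  rcases le_total (P1.idxOf u) (P1.idxOf z) with h | h
  · exact connected_common E ℓ hdag h1 h2 hu1 hz1 hu2 hz2 h
  · exact (@Std.Symm.symm _ _ (@Relation.ReflTransGen.stdSymm _ _ ⟨hsymm⟩) _ _)
      (connected_common E ℓ hdag h1 h2 hz1 hu1 hz2 hu2 h)


end DSP
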